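/- Let $n \geq 3$ and let $L : (\mathbb{Z}/n\mathbb{Z})^d \to \{C, A, T\}$ be a labeling. Define $\#(AC) + \#(AT)$ as the number of ordered pairs $(x, v)$ with $x \in (\mathbb{Z}/n\mathbb{Z})^d$, $v \in \{-1,0,1\}^d \setminus \{0\}$, $L(x) = A$, and $L(x+v) \in \{C, T\}$. Then $\#(AC) + \#(AT) \leq 3^{d-1} n^d$. -/

import Mathlib

open Finset

inductive Letter | C | A | T
deriving DecidableEq

namespace CatAux

variable {n d : ℕ} [NeZero n]

noncomputable def bv (n : ℕ) [NeZero n] (b : Bool) : ZMod n := if b then 1 else 0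

noncomputable def vec (ε : Fin d → Bool) : Fin d → ZMod n := fun j => bv n (ε j)

noncomputable def mker (n : ℕ) [NeZero n] (t : ZMod n) : ℝ :=
  if t = 0 ∨ t = 1 ∨ t = -1 then 1 else 0
noncomputable def eker (n : ℕ) [NeZero n] (t : ZMod n) : ℝ := if t = 0 then 1 else 0
noncomputable def Pker (n : ℕ) [NeZero n] (t : ZMod n) : ℝ :=
  (if t = 0 then 2 else 0) + (if t = 1 then 1 else 0) + (if t = -1 then 1 else 0)
noncomputable def Qker (n : ℕ) [NeZero n] (t : ZMod n) : ℝ :=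
  (if t = 0 then 2 else 0) - (if t = 1 then 1 else 0) - (if t = -1 then 1 else 0)

noncomputable def wt (T : Finset (Fin d)) (j : Fin d) (b : Bool) : ℝ :=
  if j ∈ T then 1 else if b then -1 else 1

noncomputable def sg (T : Finset (Fin d)) (ε : Fin d → Bool) : ℝ := ∏ j, wt T j (ε j)

noncomputable def corr (f : (Fin d → ZMod n) → ℝ) (δ : Fin d → ZMod n) : ℝ :=
  ∑ x, f x * f (x + δ)

noncomputable def gfun (f : (Fin d → ZMod n) → ℝ) (T : Finset (Fin d))
    (y : Fin d → ZMod n) : ℝ :=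
  ∑ ε : Fin d → Bool, sg T ε * f (y + vec ε)

noncomputable def cT (d : ℕ) (T : Finset (Fin d)) : ℝ :=
  3 ^ (d - 1) + (-1) ^ (d - T.card) * 3 ^ T.card

section scalar

variable (h10 : (1 : ZMod n) ≠ 0) (hm0 : (-1 : ZMod n) ≠ 0) (h1m : (1 : ZMod n) ≠ -1)

include h10 hm0 h1m in
lemma fourm (t : ZMod n) : 4 * mker n t = 3 * Pker n t - Qker n t := by
  unfold mker Pker Qker
  by_cases h0 : t = 0 <;> by_cases h1 : t = 1 <;> by_cases hm : t = -1 <;>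
    simp_all <;> norm_num

include h10 hm0 h1m in
lemma foure (t : ZMod n) : 4 * eker n t = Pker n t + Qker n t := by
  unfold eker Pker Qker
  by_cases h0 : t = 0 <;> by_cases h1 : t = 1 <;> by_cases hm : t = -1 <;>
    simp_all <;> norm_num

include h10 hm0 h1m in
lemma boolsum (T : Finset (Fin d)) (j : Fin d) (t : ZMod n) :
    (∑ p : Bool × Bool, wt T j p.1 * wt T j p.2 *
      (if t = bv n p.2 - bv n p.1 then (1:ℝ) else 0))
      = if j ∈ T then Pker n t else Qker n t := by
  rw [Fintype.sum_prod_type]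
  rw [Fintype.sum_bool]
  rw [Fintype.sum_bool, Fintype.sum_bool]
  unfold wt bv Pker Qker
  by_cases hj : j ∈ T <;> by_cases h0 : t = 0 <;> by_cases h1 : t = 1 <;>
    by_cases hm : t = -1 <;>
    simp_all [sub_zero, zero_sub, sub_self] <;> norm_num

end scalar


section structural

variable (h10 : (1 : ZMod n) ≠ 0) (hm0 : (-1 : ZMod n) ≠ 0) (h1m : (1 : ZMod n) ≠ -1)

lemma shift_sum (f : (Fin d → ZMod n) → ℝ) (a : Fin d → ZMod n) :
    ∑ y, f (y + a) = ∑ x, f x :=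
  Fintype.sum_equiv (Equiv.addRight a) _ _ (fun _ => rfl)

lemma shift_corr (f : (Fin d → ZMod n) → ℝ) (a b : Fin d → ZMod n) :
    ∑ y, f (y + a) * f (y + b) = corr f (b - a) :=
  Fintype.sum_equiv (Equiv.addRight a) _ _ (fun y => by
    show f (y + a) * f (y + b) = f (y + a) * f ((y + a) + (b - a))
    congr 2
    abel)

include h10 hm0 h1m in
lemma coordFactor (T : Finset (Fin d)) (δ : Fin d → ZMod n) :
    (∑ ε : Fin d → Bool, ∑ ε' : Fin d → Bool,
      sg T ε * sg T ε' * (if δ = vec ε' - vec ε then (1:ℝ) else 0))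
    = ∏ j, (if j ∈ T then Pker n (δ j) else Qker n (δ j)) := by
  have hsummand : ∀ ε ε' : Fin d → Bool,
      sg T ε * sg T ε' * (if δ = vec ε' - vec ε then (1:ℝ) else 0)
      = ∏ j, (wt T j (ε j) * wt T j (ε' j) *
          (if δ j = bv n (ε' j) - bv n (ε j) then (1:ℝ) else 0)) := by
    intro ε ε'
    have h1 : (if δ = vec ε' - vec ε then (1:ℝ) else 0)
        = ∏ j, (if δ j = bv n (ε' j) - bv n (ε j) then (1:ℝ) else 0) := by
      rw [Fintype.prod_boole]
      by_cases h : δ = vec ε' - vec ε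
      · rw [if_pos h, if_pos]
        intro j; rw [h]; rfl
      · rw [if_neg h, if_neg]
        intro hall; exact h (funext fun j => hall j)
    rw [h1, sg, sg, ← Finset.prod_mul_distrib, ← Finset.prod_mul_distrib]
  calc (∑ ε : Fin d → Bool, ∑ ε' : Fin d → Bool,
      sg T ε * sg T ε' * (if δ = vec ε' - vec ε then (1:ℝ) else 0))
      = ∑ q : (Fin d → Bool) × (Fin d → Bool),
          ∏ j, (wt T j (q.1 j) * wt T j (q.2 j) *
            (if δ j = bv n (q.2 j) - bv n (q.1 j) then (1:ℝ) else 0)) := by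
        rw [Fintype.sum_prod_type]
        exact Finset.sum_congr rfl fun ε _ => Finset.sum_congr rfl fun ε' _ => hsummand ε ε'
    _ = ∑ F : Fin d → Bool × Bool,
          ∏ j, (wt T j (F j).1 * wt T j (F j).2 *
            (if δ j = bv n (F j).2 - bv n (F j).1 then (1:ℝ) else 0)) :=
        (Fintype.sum_equiv (Equiv.arrowProdEquivProdArrow (Fin d) (fun _ => Bool) (fun _ => Bool)) _ _
          (fun F => rfl)).symm
    _ = ∏ j, ∑ p : Bool × Bool, (wt T j p.1 * wt T j p.2 *
            (if δ j = bv n p.2 - bv n p.1 then (1:ℝ) else 0)) := by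
        rw [Finset.prod_univ_sum]
        rw [Fintype.piFinset_univ]
    _ = ∏ j, (if j ∈ T then Pker n (δ j) else Qker n (δ j)) :=
        Finset.prod_congr rfl fun j _ => boolsum h10 hm0 h1m T j (δ j)

include h10 hm0 h1m in
lemma gram (f : (Fin d → ZMod n) → ℝ) (T : Finset (Fin d)) :
    ∑ y, (gfun f T y)^2
    = ∑ δ, (∏ j, (if j ∈ T then Pker n (δ j) else Qker n (δ j))) * corr f δ := by
  have L1 : ∑ y, (gfun f T y)^2 = ∑ ε : Fin d → Bool, ∑ ε' : Fin d → Bool,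
      sg T ε * sg T ε' * corr f (vec ε' - vec ε) := by
    unfold gfun
    simp_rw [sq, Finset.sum_mul_sum]
    rw [Finset.sum_comm]
    refine Finset.sum_congr rfl fun ε _ => ?_
    rw [Finset.sum_comm]
    refine Finset.sum_congr rfl fun ε' _ => ?_
    rw [← shift_corr f (vec ε) (vec ε')]
    rw [Finset.mul_sum]
    exact Finset.sum_congr rfl fun y _ => mul_mul_mul_comm
      (sg T ε) (f (y + vec ε)) (sg T ε') (f (y + vec ε'))
  have L2 : ∑ δ, (∏ j, (if j ∈ T then Pker n (δ j) else Qker n (δ j))) * corr f δ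
      = ∑ ε : Fin d → Bool, ∑ ε' : Fin d → Bool,
        sg T ε * sg T ε' * corr f (vec ε' - vec ε) := by
    simp_rw [← coordFactor h10 hm0 h1m T, Finset.sum_mul]
    rw [Finset.sum_comm]
    refine Finset.sum_congr rfl fun ε _ => ?_
    rw [Finset.sum_comm]
    refine Finset.sum_congr rfl fun ε' _ => ?_
    simp_rw [mul_assoc, boole_mul, mul_ite, mul_zero, ← mul_assoc]
    rw [Finset.sum_ite_eq' Finset.univ (vec ε' - vec ε)
      (fun δ => sg T ε * sg T ε' * corr f δ)]
    simp
  rw [L1, L2]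

end structural


section identity

variable (h10 : (1 : ZMod n) ≠ 0) (hm0 : (-1 : ZMod n) ≠ 0) (h1m : (1 : ZMod n) ≠ -1)

lemma filter_mem_univ (T : Finset (Fin d)) :
    Finset.univ.filter (· ∈ T) = T := by ext j; simp

lemma filter_not_mem_univ (T : Finset (Fin d)) :
    Finset.univ.filter (· ∉ T) = Finset.univ \ T := by ext j; simp

include h10 hm0 h1m in
lemma kernelId (δ : Fin d → ZMod n) :
    (4:ℝ)^d * ((∏ j, mker n (δ j)) + 3^(d-1) * ∏ j, eker n (δ j))
    = ∑ T ∈ (Finset.univ : Finset (Fin d)).powerset, cT d T *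
        ∏ j, (if j ∈ T then Pker n (δ j) else Qker n (δ j)) := by
  have h4 : (4:ℝ)^d = ∏ _j : Fin d, (4:ℝ) := by
    rw [Finset.prod_const, Finset.card_univ, Fintype.card_fin]
  have h4m : (4:ℝ)^d * ∏ j, mker n (δ j)
      = ∏ j, (3 * Pker n (δ j) + (- Qker n (δ j))) := by
    rw [h4, ← Finset.prod_mul_distrib]
    exact Finset.prod_congr rfl fun j _ => by
      rw [fourm h10 hm0 h1m (δ j)]; ring
  have h4e : (4:ℝ)^d * ∏ j, eker n (δ j)
      = ∏ j, (Pker n (δ j) + Qker n (δ j)) := by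
    rw [h4, ← Finset.prod_mul_distrib]
    exact Finset.prod_congr rfl fun j _ => foure h10 hm0 h1m (δ j)
  have expand : (4:ℝ)^d * ((∏ j, mker n (δ j)) + 3^(d-1) * ∏ j, eker n (δ j))
      = (∏ j, (3 * Pker n (δ j) + (- Qker n (δ j))))
        + 3^(d-1) * ∏ j, (Pker n (δ j) + Qker n (δ j)) := by
    rw [← h4m, ← h4e]; ring
  rw [expand, Finset.prod_add, Finset.prod_add, Finset.mul_sum, ← Finset.sum_add_distrib]
  refine Finset.sum_congr rfl fun T hT => ?_
  have hTsub : T ⊆ Finset.univ := Finset.mem_powerset.mp hT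
  have hP : ∏ j ∈ T, (3 * Pker n (δ j)) = 3 ^ T.card * ∏ j ∈ T, Pker n (δ j) := by
    rw [Finset.prod_mul_distrib, Finset.prod_const]
  have hQ : ∏ j ∈ Finset.univ \ T, (- Qker n (δ j))
      = (-1) ^ (d - T.card) * ∏ j ∈ Finset.univ \ T, Qker n (δ j) := by
    have : ∀ j ∈ Finset.univ \ T, - Qker n (δ j) = (-1) * Qker n (δ j) := by
      intro j _; ring
    rw [Finset.prod_congr rfl this, Finset.prod_mul_distrib, Finset.prod_const,
      Finset.card_sdiff_of_subset hTsub, Finset.card_univ, Fintype.card_fin]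
  have hsplit : ∏ j, (if j ∈ T then Pker n (δ j) else Qker n (δ j))
      = (∏ j ∈ T, Pker n (δ j)) * ∏ j ∈ Finset.univ \ T, Qker n (δ j) := by
    rw [← Finset.prod_filter_mul_prod_filter_not Finset.univ (· ∈ T)]
    congr 1
    · rw [filter_mem_univ]
      exact Finset.prod_congr rfl fun j hj => if_pos hj
    · rw [filter_not_mem_univ]
      refine Finset.prod_congr rfl fun j hj => if_neg ?_
      exact (Finset.mem_sdiff.mp hj).2
  rw [hP, hQ, hsplit, cT]
  ring

noncomputable def Cfin (n d : ℕ) [NeZero n] : Finset (Fin d → ZMod n) :=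
  Finset.univ.filter (fun v => ∀ j, v j = 0 ∨ v j = 1 ∨ v j = -1)

include h10 hm0 h1m in
lemma identity (f : (Fin d → ZMod n) → ℝ) :
    (4:ℝ)^d * ((∑ v ∈ Cfin n d, corr f v) + 3^(d-1) * corr f 0)
    = ∑ T ∈ (Finset.univ : Finset (Fin d)).powerset, cT d T * ∑ y, (gfun f T y)^2 := by
  have hm' : ∑ v ∈ Cfin n d, corr f v = ∑ δ, (∏ j, mker n (δ j)) * corr f δ := by
    rw [Cfin, Finset.sum_filter]
    refine Finset.sum_congr rfl fun δ _ => ?_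
    unfold mker
    rw [Fintype.prod_boole, boole_mul]
    simp
  have he' : corr f 0 = ∑ δ, (∏ j, eker n (δ j)) * corr f δ := by
    unfold eker
    simp_rw [Fintype.prod_boole]
    have : ∀ δ : Fin d → ZMod n, (∀ j, δ j = 0) ↔ δ = 0 := by
      intro δ; constructor
      · intro h; exact funext fun j => h j
      · intro h j; rw [h]; rfl
    simp_rw [this, boole_mul]
    rw [Finset.sum_ite_eq' Finset.univ 0 (corr f)]
    simp
  have rhs : ∑ T ∈ (Finset.univ : Finset (Fin d)).powerset, cT d T * ∑ y, (gfun f T y)^2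
      = ∑ δ, ((4:ℝ)^d * ((∏ j, mker n (δ j)) + 3^(d-1) * ∏ j, eker n (δ j))) * corr f δ := by
    simp_rw [gram h10 hm0 h1m f, Finset.mul_sum]
    rw [Finset.sum_comm]
    refine Finset.sum_congr rfl fun δ _ => ?_
    simp_rw [← mul_assoc]
    rw [← Finset.sum_mul, ← kernelId h10 hm0 h1m δ]
  rw [rhs, hm', he']
  simp_rw [mul_add, add_mul, Finset.sum_add_distrib, Finset.mul_sum]
  congr 1
  · refine Finset.sum_congr rfl fun δ _ => ?_; ring
  · refine Finset.sum_congr rfl fun δ _ => ?_; ring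

lemma cT_nonneg (T : Finset (Fin d)) : 0 ≤ cT d T := by
  rw [cT]
  have hcard : T.card ≤ d := by
    simpa using Finset.card_le_card (Finset.subset_univ T)
  rcases Nat.even_or_odd (d - T.card) with he | ho
  · rw [he.neg_one_pow]
    positivity
  · rw [ho.neg_one_pow]
    have h1 : 1 ≤ d - T.card := by
      rcases Nat.eq_zero_or_pos (d - T.card) with h | h
      · exfalso; rw [h] at ho; exact (Nat.not_odd_zero) ho
      · exact h
    have hTd : T.card ≤ d - 1 := by omega
    have : (3:ℝ) ^ T.card ≤ 3 ^ (d-1) :=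
      pow_le_pow_right₀ (by norm_num) hTd
    nlinarith

lemma cT_univ (hd : 1 ≤ d) : cT d (Finset.univ : Finset (Fin d)) = 4 * 3 ^ (d-1) := by
  rw [cT, Finset.card_univ, Fintype.card_fin, Nat.sub_self, pow_zero, one_mul]
  have : d = (d - 1) + 1 := by omega
  rw [this]
  simp [pow_succ]
  ring

end identity

section final

variable (h10 : (1 : ZMod n) ≠ 0) (hm0 : (-1 : ZMod n) ≠ 0) (h1m : (1 : ZMod n) ≠ -1)

lemma sg_univ (ε : Fin d → Bool) : sg (Finset.univ : Finset (Fin d)) ε = 1 := by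
  unfold sg wt
  simp

lemma card_G : Fintype.card (Fin d → ZMod n) = n ^ d := by
  rw [Fintype.card_fun, ZMod.card, Fintype.card_fin]

lemma gfun_univ_sum (f : (Fin d → ZMod n) → ℝ) :
    ∑ y, gfun f Finset.univ y = 2^d * ∑ x, f x := by
  unfold gfun
  simp_rw [sg_univ, one_mul]
  rw [Finset.sum_comm]
  rw [Finset.sum_congr rfl fun ε (_ : ε ∈ Finset.univ) => shift_sum f (vec ε)]
  rw [Finset.sum_const, Finset.card_univ, Fintype.card_fun, Fintype.card_bool,
    Fintype.card_fin, nsmul_eq_mul]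
  push_cast
  ring

include h10 hm0 h1m in
lemma card_Cfin : (Cfin n d).card = 3 ^ d := by
  have hset : Cfin n d = Fintype.piFinset (fun _ : Fin d => ({0,1,-1} : Finset (ZMod n))) := by
    ext v
    simp [Cfin, Fintype.mem_piFinset]
  rw [hset, Fintype.card_piFinset]
  have hcard : ({0,1,-1} : Finset (ZMod n)).card = 3 := by
    rw [Finset.card_insert_of_notMem, Finset.card_insert_of_notMem, Finset.card_singleton]
    · simp [h1m]
    · simp only [Finset.mem_insert, Finset.mem_singleton]
      push_neg
      refine ⟨fun h => h10 h.symm, fun h => hm0 h.symm⟩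
  simp [hcard]

noncomputable def indA (L : (Fin d → ZMod n) → Letter) : (Fin d → ZMod n) → ℝ :=
  fun x => if L x = Letter.A then 1 else 0

lemma indA_nonneg (L : (Fin d → ZMod n) → Letter) (x : Fin d → ZMod n) : 0 ≤ indA L x := by
  unfold indA; split_ifs <;> norm_num

lemma corr_zero (L : (Fin d → ZMod n) → Letter) :
    corr (indA L) 0 = ∑ x, indA L x := by
  unfold corr
  refine Finset.sum_congr rfl fun x _ => ?_
  rw [add_zero]
  unfold indA
  split_ifs <;> norm_num

lemma pointwise (L : (Fin d → ZMod n) → Letter) (x v : Fin d → ZMod n) :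
    (if ((∀ j, v j = 0 ∨ v j = 1 ∨ v j = -1) ∧ v ≠ 0 ∧ L x = Letter.A ∧
        (L (x + v) = Letter.C ∨ L (x + v) = Letter.T)) then (1:ℝ) else 0)
    = (if (∀ j, v j = 0 ∨ v j = 1 ∨ v j = -1) then (1:ℝ) else 0) *
        (indA L x * (1 - indA L (x + v))) := by
  unfold indA
  by_cases hC : (∀ j, v j = 0 ∨ v j = 1 ∨ v j = -1)
  · by_cases hA : L x = Letter.A
    · by_cases hv : L (x + v) = Letter.A
      · simp [hC, hA, hv]
      · have hvne : v ≠ 0 := by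
          intro h
          rw [h, add_zero] at hv
          exact hv hA
        have hCT : (L (x + v) = Letter.C ∨ L (x + v) = Letter.T) := by
          cases h : L (x + v)
          · exact Or.inl rfl
          · exact absurd h hv
          · exact Or.inr rfl
        simp [hC, hA, hv, hvne, hCT]
    · simp [hA]
  · simp [hC]

include h10 hm0 h1m in
lemma count_eq (L : (Fin d → ZMod n) → Letter) :
    ((Finset.univ.filter
        (fun p : (Fin d → ZMod n) × (Fin d → ZMod n) =>
          (∀ j, p.2 j = 0 ∨ p.2 j = 1 ∨ p.2 j = -1) ∧ p.2 ≠ 0 ∧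
          L p.1 = Letter.A ∧
          (L (p.1 + p.2) = Letter.C ∨ L (p.1 + p.2) = Letter.T))).card : ℝ)
    = 3^d * (∑ x, indA L x) - ∑ v ∈ Cfin n d, corr (indA L) v := by
  rw [Finset.natCast_card_filter]
  rw [Fintype.sum_prod_type]
  rw [Finset.sum_congr rfl fun x (_ : x ∈ Finset.univ) =>
    Finset.sum_congr rfl fun v (_ : v ∈ Finset.univ) => pointwise L x v]
  rw [Finset.sum_comm]
  have inner : ∀ v : Fin d → ZMod n,
      (∑ x, (if (∀ j, v j = 0 ∨ v j = 1 ∨ v j = -1) then (1:ℝ) else 0) *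
        (indA L x * (1 - indA L (x + v))))
      = if (∀ j, v j = 0 ∨ v j = 1 ∨ v j = -1) then
          ((∑ x, indA L x) - corr (indA L) v) else 0 := by
    intro v
    rw [← Finset.mul_sum, boole_mul]
    congr 1
    unfold corr
    rw [← Finset.sum_sub_distrib]
    refine Finset.sum_congr rfl fun x _ => ?_
    ring
  rw [Finset.sum_congr rfl fun v (_ : v ∈ Finset.univ) => inner v]
  rw [← Finset.sum_filter]
  have : Finset.univ.filter (fun v : Fin d → ZMod n => ∀ j, v j = 0 ∨ v j = 1 ∨ v j = -1)
      = Cfin n d := rfl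
  rw [this, Finset.sum_sub_distrib, Finset.sum_const, card_Cfin h10 hm0 h1m, nsmul_eq_mul]
  push_cast
  ring

end final

end CatAux


theorem stmt_8 (n d : ℕ) [NeZero n] (hn : 3 ≤ n)
    (L : (Fin d → ZMod n) → Letter) :
    (Finset.univ.filter
        (fun p : (Fin d → ZMod n) × (Fin d → ZMod n) =>
          (∀ j, p.2 j = 0 ∨ p.2 j = 1 ∨ p.2 j = -1) ∧ p.2 ≠ 0 ∧
          L p.1 = Letter.A ∧
          (L (p.1 + p.2) = Letter.C ∨ L (p.1 + p.2) = Letter.T))).card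
      ≤ 3 ^ (d - 1) * n ^ d := by
  classical
  rcases Nat.eq_zero_or_pos d with hd0 | hd
  · subst hd0
    have hempty : (Finset.univ.filter
        (fun p : (Fin 0 → ZMod n) × (Fin 0 → ZMod n) =>
          (∀ j, p.2 j = 0 ∨ p.2 j = 1 ∨ p.2 j = -1) ∧ p.2 ≠ 0 ∧
          L p.1 = Letter.A ∧
          (L (p.1 + p.2) = Letter.C ∨ L (p.1 + p.2) = Letter.T))) = ∅ := by
      rw [Finset.filter_eq_empty_iff]
      rintro p - ⟨-, h2, -⟩
      exact h2 (funext fun j => j.elim0)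
    rw [hempty]
    simp
  · haveI : Fact (1 < n) := ⟨by omega⟩
    have h10 : (1 : ZMod n) ≠ 0 := one_ne_zero
    have hm0 : (-1 : ZMod n) ≠ 0 := neg_ne_zero.mpr h10
    have h1m : (1 : ZMod n) ≠ -1 := by
      intro h
      have h2 : ((2 : ℕ) : ZMod n) = 0 := by
        push_cast
        linear_combination h
      have hdvd := (ZMod.natCast_eq_zero_iff 2 n).mp h2
      have := Nat.le_of_dvd (by norm_num) hdvd
      omega
    have key1 : 4 * 3^(d-1) * (∑ y, (CatAux.gfun (CatAux.indA L) Finset.univ y)^2)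
        ≤ (4:ℝ)^d * ((∑ v ∈ CatAux.Cfin n d, CatAux.corr (CatAux.indA L) v)
            + 3^(d-1) * CatAux.corr (CatAux.indA L) 0) := by
      rw [CatAux.identity h10 hm0 h1m (CatAux.indA L)]
      have hterm := Finset.single_le_sum
        (f := fun T => CatAux.cT d T * ∑ y, (CatAux.gfun (CatAux.indA L) T y)^2)
        (fun T _ => mul_nonneg (CatAux.cT_nonneg T)
          (Finset.sum_nonneg fun y _ => sq_nonneg _))
        (Finset.mem_powerset_self (Finset.univ : Finset (Fin d)))
      have hterm2 : CatAux.cT d Finset.univ *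
          (∑ y, (CatAux.gfun (CatAux.indA L) Finset.univ y)^2)
          <= (∑ T ∈ (Finset.univ : Finset (Fin d)).powerset,
              CatAux.cT d T * ∑ y, (CatAux.gfun (CatAux.indA L) T y)^2) := hterm
      rw [CatAux.cT_univ hd] at hterm2
      exact hterm2
    have key2 : ((2:ℝ)^d * ∑ x, CatAux.indA L x)^2
        ≤ (n:ℝ)^d * ∑ y, (CatAux.gfun (CatAux.indA L) Finset.univ y)^2 := by
      rw [← CatAux.gfun_univ_sum]
      have h := sq_sum_le_card_mul_sum_sq (s := Finset.univ)
        (f := CatAux.gfun (CatAux.indA L) Finset.univ)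
      rw [Finset.card_univ, CatAux.card_G] at h
      exact_mod_cast h
    have hσ : 0 ≤ ∑ x, CatAux.indA L x :=
      Finset.sum_nonneg fun x _ => CatAux.indA_nonneg L x
    have hNpos : (0:ℝ) < (n:ℝ)^d := by
      have : (0:ℝ) < (n:ℝ) := by exact_mod_cast (by omega : 0 < n)
      positivity
    have hcount := CatAux.count_eq h10 hm0 h1m L
    rw [CatAux.corr_zero L] at key1
    have hquad : 4 * 3^(d-1) * (∑ x, CatAux.indA L x)^2
        ≤ (n:ℝ)^d * ((∑ v ∈ CatAux.Cfin n d, CatAux.corr (CatAux.indA L) v)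
            + 3^(d-1) * ∑ x, CatAux.indA L x) := by
      have h1 := mul_le_mul_of_nonneg_left key2
        (show (0:ℝ) ≤ 4 * 3^(d-1) by positivity)
      have h2 := mul_le_mul_of_nonneg_left key1 hNpos.le
      have hp : ((2:ℝ)^d)^2 = 4^d := by
        rw [← pow_mul, mul_comm, pow_mul]
        norm_num
      have h3 : (4:ℝ)^d * (4 * 3^(d-1) * (∑ x, CatAux.indA L x)^2)
          ≤ (4:ℝ)^d * ((n:ℝ)^d * ((∑ v ∈ CatAux.Cfin n d, CatAux.corr (CatAux.indA L) v)
            + 3^(d-1) * ∑ x, CatAux.indA L x)) := by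
        rw [mul_pow, hp] at h1
        nlinarith [h1, h2]
      exact le_of_mul_le_mul_left h3 (pow_pos (by norm_num) d)
    rw [← Nat.cast_le (α := ℝ)]
    push_cast
    rw [hcount]
    have h3d : (3:ℝ)^d = 3 * 3^(d-1) := by
      rw [show d = (d-1)+1 by omega, pow_succ]
      have : ((d-1)+1) - 1 = d - 1 := by omega
      rw [this]
      ring
    have hint : (0:ℝ) ≤ 3^(d-1) * ((n:ℝ)^d - 2 * ∑ x, CatAux.indA L x)^2 :=
      mul_nonneg (pow_nonneg (by norm_num) (d-1)) (sq_nonneg _)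
    have hfinal : (3 * 3^(d-1) * (∑ x, CatAux.indA L x)
          - ∑ v ∈ CatAux.Cfin n d, CatAux.corr (CatAux.indA L) v) * (n:ℝ)^d
        ≤ (3^(d-1) * (n:ℝ)^d) * (n:ℝ)^d := by
      nlinarith [hquad, hint]
    rw [h3d]
    exact le_of_mul_le_mul_right hfinal hNpos
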